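/- (Dieudonné–Dwork lemma over number fields.) Let K be a finite Galois extension of ℚ, p a rational prime unramified in K, 𝔭 a nonzero prime ideal of 𝓞_K lying over p, and τ ∈ Gal(K/ℚ) a Frobenius automorphism at 𝔭 (i.e., τ(x) − x^p ∈ 𝔭 for every x ∈ 𝓞_K). Let F ∈ 1 + x·K[[x]], and let F^τ(x^p) denote the power series obtained from F by applying τ to every coefficient and substituting x^p for x. Then every coefficient of F lies in 𝓞_{K,𝔭} if and only if the quotient F^τ(x^p)/F(x)^p (computed in K[[x]], which is legitimate since F(0) = 1) lies in 1 + p·x·𝓞_{K,𝔭}[[x]], i.e., its constant coefficient is 1 and each of its coefficients of positive index lies in p·𝓞_{K,𝔭}. -/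

import Mathlib

open NumberField PowerSeries

/-- `a ∈ c · 𝓞_{K,𝔭}`: there are `u ∈ 𝓞_K` and `s ∈ 𝓞_K ∖ 𝔭` with `s·a = c·u`. -/
def MemLoc {K : Type*} [Field K] [NumberField K]
    (𝔭 : Ideal (𝓞 K)) (c a : K) : Prop :=
  ∃ s u : 𝓞 K, s ∉ 𝔭 ∧ (s : K) * a = c * (u : K)

/-- `τ` is a Frobenius automorphism at `𝔭` for the rational prime `p`. -/
def IsFrobAt {K : Type*} [Field K] [NumberField K]
    (τ : K ≃ₐ[ℚ] K) (𝔭 : Ideal (𝓞 K)) (p : ℕ) : Prop :=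
  ∀ x : 𝓞 K, ∃ y : 𝓞 K, (y : K) = τ (x : K) - (x : K) ^ p ∧ y ∈ 𝔭

section Aux

variable {K : Type*} [Field K] [NumberField K]

def Rloc (𝔭 : Ideal (𝓞 K)) (h𝔭 : 𝔭.IsPrime) : Subring K where
  carrier := {a | MemLoc 𝔭 1 a}
  zero_mem' := ⟨1, 0, fun h => h𝔭.ne_top ((Ideal.eq_top_iff_one 𝔭).2 h), by simp⟩
  one_mem' := ⟨1, 1, fun h => h𝔭.ne_top ((Ideal.eq_top_iff_one 𝔭).2 h), by simp⟩
  add_mem' := by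
    rintro a b ⟨s, u, hs, hu⟩ ⟨t, v, ht, hv⟩
    refine ⟨s * t, t * u + s * v, fun h => ((h𝔭.mem_or_mem h).elim hs ht), ?_⟩
    push_cast
    linear_combination (t : K) * hu + (s : K) * hv
  neg_mem' := by
    rintro a ⟨s, u, hs, hu⟩
    exact ⟨s, -u, hs, by push_cast; linear_combination -hu⟩
  mul_mem' := by
    rintro a b ⟨s, u, hs, hu⟩ ⟨t, v, ht, hv⟩
    refine ⟨s * t, u * v, fun h => ((h𝔭.mem_or_mem h).elim hs ht), ?_⟩
    push_cast
    linear_combination (t : K) * b * hu + (u : K) * hv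

theorem memLoc_one_iff {𝔭 : Ideal (𝓞 K)} (h𝔭 : 𝔭.IsPrime) {a : K} :
    MemLoc 𝔭 1 a ↔ a ∈ Rloc 𝔭 h𝔭 := Iff.rfl

theorem memLoc_p_iff {𝔭 : Ideal (𝓞 K)} (h𝔭 : 𝔭.IsPrime) {p : ℕ} {a : K} :
    MemLoc 𝔭 ((p : ℕ) : K) a ↔ ∃ b ∈ Rloc 𝔭 h𝔭, a = (p : K) * b := by
  constructor
  · rintro ⟨s, u, hs, hu⟩
    have hs0 : (s : K) ≠ 0 := by
      have h0 : s ≠ 0 := by rintro rfl; exact hs 𝔭.zero_mem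
      exact RingOfIntegers.coe_ne_zero_iff.2 h0
    refine ⟨(u : K) / (s : K), ⟨s, u, hs, by field_simp⟩, by field_simp; linear_combination hu⟩
  · rintro ⟨b, ⟨s, u, hs, hu⟩, rfl⟩
    exact ⟨s, u, hs, by push_cast at hu ⊢; linear_combination (p : K) * hu⟩


theorem charP_quot {𝔭 : Ideal (𝓞 K)} (h𝔭 : 𝔭.IsPrime) {p : ℕ} (hp : p.Prime)
    (h𝔭p : (p : 𝓞 K) ∈ 𝔭) :
    CharP ((Rloc 𝔭 h𝔭) ⧸ (Ideal.span {(p : Rloc 𝔭 h𝔭)})) p := by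
  constructor
  intro n
  rw [show ((n : ℕ) : (Rloc 𝔭 h𝔭) ⧸ (Ideal.span {(p : Rloc 𝔭 h𝔭)})) =
      Ideal.Quotient.mk _ ((n : Rloc 𝔭 h𝔭)) from (map_natCast _ n).symm,
    Ideal.Quotient.eq_zero_iff_mem, Ideal.mem_span_singleton]
  constructor
  · rintro ⟨c, hc⟩
    by_contra hdvd
    -- push to K
    have hcK : ((n : ℕ) : K) = (p : K) * (c : K) := by
      have := congrArg (fun x : Rloc 𝔭 h𝔭 => (x : K)) hc
      push_cast at this
      simpa using this
    obtain ⟨s, u, hs, hu⟩ := c.2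
    -- s * n = p * u in 𝓞 K
    have hOK : s * (n : 𝓞 K) = (p : 𝓞 K) * u := by
      apply RingOfIntegers.coe_injective
      push_cast
      calc (s : K) * n = (s : K) * ((p : K) * (c : K)) := by rw [← hcK]
        _ = (p : K) * ((s:K) * (c:K)) := by ring
        _ = (p : K) * u := by rw [hu]; ring
    have hn𝔭 : (n : 𝓞 K) ∈ 𝔭 := by
      rcases h𝔭.mem_or_mem (show s * (n : 𝓞 K) ∈ 𝔭 from hOK ▸ Ideal.mul_mem_right _ _ h𝔭p) with h | h
      · exact absurd h hs
      · exact h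
    have hcop : IsCoprime (p : ℤ) (n : ℤ) := by
      rw [Int.isCoprime_iff_gcd_eq_one, Int.gcd_natCast_natCast]
      exact (Nat.Prime.coprime_iff_not_dvd hp).2 hdvd
    obtain ⟨a, b, hab⟩ := hcop
    have : (1 : 𝓞 K) ∈ 𝔭 := by
      have := congrArg (algebraMap ℤ (𝓞 K)) hab
      push_cast at this
      rw [← this]
      exact Ideal.add_mem _ (Ideal.mul_mem_left _ _ h𝔭p) (Ideal.mul_mem_left _ _ hn𝔭)
    exact h𝔭.ne_top ((Ideal.eq_top_iff_one 𝔭).2 this)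
  · rintro ⟨m, rfl⟩
    exact ⟨(m : Rloc 𝔭 h𝔭), by push_cast; ring⟩

theorem exists_p_mul {𝔭 : Ideal (𝓞 K)} (h𝔭 : 𝔭.IsPrime) {p : ℕ} (hp : p.Prime)
    (hunram : Ideal.ramificationIdx' (Ideal.span {(p : ℤ)}) 𝔭 = 1)
    (h𝔭p : (p : 𝓞 K) ∈ 𝔭) {x : 𝓞 K} (hx : x ∈ 𝔭) :
    ∃ s u : 𝓞 K, s ∉ 𝔭 ∧ s * x = (p : 𝓞 K) * u := by
  have hmap : Ideal.map (algebraMap ℤ (𝓞 K)) (Ideal.span {(p : ℤ)}) =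
      Ideal.span {(p : 𝓞 K)} := by
    rw [Ideal.map_span, Set.image_singleton, map_natCast]
  have hnle : ¬ Ideal.span {(p : 𝓞 K)} ≤ 𝔭 ^ 2 := by
    intro hle
    have he : sSup {n : ℕ | Ideal.map (algebraMap ℤ (𝓞 K)) (Ideal.span {(p : ℤ)}) ≤ 𝔭 ^ n}
        = 1 := hunram
    by_cases hb : BddAbove {n : ℕ | Ideal.map (algebraMap ℤ (𝓞 K)) (Ideal.span {(p : ℤ)}) ≤ 𝔭 ^ n}
    · have h2 : (2 : ℕ) ∈ {n : ℕ | Ideal.map (algebraMap ℤ (𝓞 K)) (Ideal.span {(p : ℤ)}) ≤ 𝔭 ^ n} := by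
        rw [Set.mem_setOf_eq, hmap]; exact hle
      have := le_csSup hb h2
      omega
    · rw [csSup_of_not_bddAbove hb, csSup_empty] at he
      exact absurd he (by norm_num)
  obtain ⟨I, hI⟩ := (Ideal.dvd_iff_le).2 (Ideal.span_le.2 (Set.singleton_subset_iff.2 h𝔭p))
  have hInle : ¬ I ≤ 𝔭 := fun h => hnle (by rw [hI, pow_two]; exact Ideal.mul_mono_right h)
  obtain ⟨s, hsI, hs𝔭⟩ := SetLike.not_le_iff_exists.1 hInle
  have hmem : s * x ∈ Ideal.span {(p : 𝓞 K)} := by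
    rw [hI, mul_comm s x]; exact Ideal.mul_mem_mul hx hsI
  rw [Ideal.mem_span_singleton] at hmem
  obtain ⟨u, hu⟩ := hmem
  exact ⟨s, u, hs𝔭, hu⟩


theorem frob_mod_p {𝔭 : Ideal (𝓞 K)} (h𝔭 : 𝔭.IsPrime) {p : ℕ} (hp : p.Prime)
    (hunram : Ideal.ramificationIdx' (Ideal.span {(p : ℤ)}) 𝔭 = 1)
    (h𝔭p : (p : 𝓞 K) ∈ 𝔭) {τ : K ≃ₐ[ℚ] K} (hτ : IsFrobAt τ 𝔭 p)
    {a : K} (ha : a ∈ Rloc 𝔭 h𝔭) :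
    ∃ c ∈ Rloc 𝔭 h𝔭, τ a = a ^ p + (p : K) * c := by
  obtain ⟨s, u, hs, hu⟩ := ha
  have hs0 : (s : K) ≠ 0 := RingOfIntegers.coe_ne_zero_iff.2 (by rintro rfl; exact hs 𝔭.zero_mem)
  obtain ⟨ys, hys, hys𝔭⟩ := hτ s
  obtain ⟨yu, hyu, hyu𝔭⟩ := hτ u
  set s' : 𝓞 K := s ^ p + ys with hs'def
  have hs'K : (s' : K) = τ (s : K) := by rw [hs'def]; push_cast; linear_combination hys
  have hs'𝔭 : s' ∉ 𝔭 := by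
    intro h
    have : s ^ p ∈ 𝔭 := by
      have : s ^ p = s' - ys := by rw [hs'def]; ring
      rw [this]; exact Ideal.sub_mem _ h hys𝔭
    exact hs (h𝔭.mem_of_pow_mem _ this)
  have hs'0 : (s' : K) ≠ 0 := RingOfIntegers.coe_ne_zero_iff.2 (fun h => hs'𝔭 (h ▸ 𝔭.zero_mem))
  have hz𝔭 : yu * s ^ p - ys * u ^ p ∈ 𝔭 :=
    Ideal.sub_mem _ (Ideal.mul_mem_right _ _ hyu𝔭) (Ideal.mul_mem_right _ _ hys𝔭)
  obtain ⟨t, v, ht, htv⟩ := exists_p_mul h𝔭 hp hunram h𝔭p hz𝔭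
  have ht0 : (t : K) ≠ 0 := RingOfIntegers.coe_ne_zero_iff.2 (by rintro rfl; exact ht 𝔭.zero_mem)
  have hp0 : (p : K) ≠ 0 := by
    exact_mod_cast Nat.cast_ne_zero.2 hp.ne_zero
  refine ⟨(v : K) / ((t : K) * (s' : K) * (s : K) ^ p), ?_, ?_⟩
  · refine ⟨t * s' * s ^ p, v, ?_, ?_⟩
    · intro h
      rcases h𝔭.mem_or_mem h with h | h
      · rcases h𝔭.mem_or_mem h with h | h
        · exact ht h
        · exact hs'𝔭 h
      · exact hs (h𝔭.mem_of_pow_mem _ h)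
    · push_cast; field_simp
  · -- key identity
    have htau : (s' : K) * τ a = (u : K) ^ p + (yu : K) := by
      have := congrArg τ hu
      simp only [map_mul, map_one] at this
      rw [hs'K, this, hyu]; ring
    have hap : (s : K) ^ p * a ^ p = (u : K) ^ p := by
      rw [← mul_pow, hu]; ring
    have htvK : (t : K) * ((yu : K) * (s:K) ^ p - (ys : K) * (u:K) ^ p) = (p : K) * (v : K) := by
      have := congrArg (algebraMap (𝓞 K) K) htv
      push_cast at this
      convert this using 2 <;> push_cast <;> ring
    have hysK : (ys : K) = (s' : K) - (s : K) ^ p := by rw [hs'def]; push_cast; ring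
    field_simp
    linear_combination ((t:K) * (s:K)^p) * htau - ((t:K)*(s':K)) * hap + htvK
      + ((t:K)*(u:K)^p) * hysK


theorem coeff_pow_mem {R : Subring K} {φ : PowerSeries K} {m : ℕ}
    (h : ∀ j, j ≤ m → coeff j φ ∈ R) (k : ℕ) :
    ∀ j, j ≤ m → coeff j (φ ^ k) ∈ R := by
  induction k with
  | zero =>
    intro j hj
    rw [pow_zero, coeff_one]
    split <;> simp [Subring.one_mem, Subring.zero_mem]
  | succ k ih =>
    intro j hj
    rw [pow_succ, coeff_mul]
    refine Subring.sum_mem _ fun c hc => ?_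
    replace hc : c.1 + c.2 = j := Finset.HasAntidiagonal.mem_antidiagonal.1 hc
    exact Subring.mul_mem _ (ih c.1 (le_trans (by omega) hj)) (h c.2 (le_trans (by omega) hj))

theorem coeff_pow_p_poly {p : ℕ} (hp : p.Prime) {R : Subring K}
    (hchar : CharP (R ⧸ Ideal.span {(p : R)}) p)
    (t : Polynomial K) (ht : ∀ j, t.coeff j ∈ R) (n : ℕ) :
    ∃ c ∈ R, (t ^ p).coeff n =
      (if p ∣ n then (t.coeff (n / p)) ^ p else 0) + (p : K) * c := by
  classical
  have hcoeffs : (↑t.coeffs : Set K) ⊆ R := by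
    intro a hamem
    rw [Finset.mem_coe, Polynomial.mem_coeffs_iff] at hamem
    obtain ⟨j, _, rfl⟩ := hamem
    exact ht j
  set t₀ : Polynomial R := t.toSubring R hcoeffs with ht₀
  haveI := hchar
  haveI : Fact p.Prime := ⟨hp⟩
  set q : R →+* R ⧸ Ideal.span {(p : R)} := Ideal.Quotient.mk _ with hq
  have key : q ((t₀ ^ p).coeff n) = q (if p ∣ n then (t₀.coeff (n / p)) ^ p else 0) := by
    have h1 : (t₀ ^ p).map q = ((t₀.map q)) ^ p := by rw [Polynomial.map_pow]
    have h2 : ((t₀.map q)) ^ p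
        = (Polynomial.expand _ p (t₀.map q)).map (frobenius _ p) :=
      (Polynomial.map_frobenius_expand p _).symm
    have h3 := congrArg (fun f => f.coeff n) (h1.trans h2)
    simp only [Polynomial.coeff_map] at h3
    rw [h3, Polynomial.coeff_expand hp.pos, apply_ite (frobenius (R ⧸ Ideal.span {(p : R)}) p),
      apply_ite q]
    simp [frobenius_def, zero_pow hp.ne_zero]
  rw [Ideal.Quotient.mk_eq_mk_iff_sub_mem, Ideal.mem_span_singleton] at key
  obtain ⟨c₀, hc₀⟩ := key
  refine ⟨(c₀ : K), SetLike.coe_mem c₀, ?_⟩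
  have := congrArg (fun x : R => (x : K)) hc₀
  push_cast at this
  have hcoe : ∀ m, ((t₀.coeff m : K)) = t.coeff m := fun m => Polynomial.coeff_toSubring t R hcoeffs
  have hcoe' : (((t₀ ^ p).coeff n : R) : K) = (t ^ p).coeff n := by
    have hmap : (t₀ ^ p).map (Subring.subtype R) = t ^ p := by
      rw [Polynomial.map_pow, Polynomial.map_toSubring]
    rw [← hmap, Polynomial.coeff_map]
    rfl
  rw [hcoe'] at this
  have hif : (((if p ∣ n then (t₀.coeff (n / p)) ^ p else 0 : R) : K))
      = (if p ∣ n then (t.coeff (n / p)) ^ p else 0) := by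
    split <;> push_cast <;> simp [hcoe]
  rw [hif] at this
  linear_combination this


theorem coeff_pow_split {p : ℕ} (hp : p.Prime) (F : PowerSeries K)
    (hF0 : constantCoeff F = 1) {n : ℕ} (hn : 1 ≤ n) :
    coeff n (F ^ p) = ((trunc n F ^ p : Polynomial K) : PowerSeries K).coeff n
      + (p : K) * coeff n F := by
  classical
  set T : PowerSeries K := ((trunc n F : Polynomial K) : PowerSeries K) with hT
  set B : PowerSeries K := mk fun i => coeff (n + i) F with hB
  have hsplit : F = T + X ^ n * B := by
    ext m
    rw [map_add, hT, Polynomial.coeff_coe, coeff_trunc, coeff_X_pow_mul']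
    by_cases hm : m < n
    · rw [if_pos hm, if_neg (by omega)]
      ring
    · rw [if_neg hm, if_pos (by omega), hB, coeff_mk]
      have : n + (m - n) = m := by omega
      rw [this]
      ring
  obtain ⟨m, hm⟩ : ∃ m, p = m + 2 := ⟨p - 2, by have := hp.two_le; omega⟩
  conv_lhs => rw [hsplit]
  rw [add_pow]
  rw [map_sum]
  conv_lhs => rw [hm]
  rw [show m + 2 + 1 = (m + 1) + 1 + 1 from rfl, Finset.sum_range_succ, Finset.sum_range_succ]
  have hzero : ∀ k ∈ Finset.range (m + 1),
      coeff n (T ^ k * (X ^ n * B) ^ (m + 2 - k) * ((m + 2).choose k : PowerSeries K)) = 0 := by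
    intro k hk
    rw [Finset.mem_range] at hk
    have hdvd : (X : PowerSeries K) ^ (n + 1) ∣
        T ^ k * (X ^ n * B) ^ (m + 2 - k) * ((m + 2).choose k : PowerSeries K) := by
      have h1 : (X : PowerSeries K) ^ (n + 1) ∣ (X ^ n * B) ^ (m + 2 - k) := by
        rw [mul_pow, ← pow_mul]
        refine Dvd.dvd.mul_right (pow_dvd_pow X ?_) _
        calc n + 1 ≤ n * 2 := by omega
          _ ≤ n * (m + 2 - k) := Nat.mul_le_mul_left n (by omega)
      exact Dvd.dvd.mul_right (Dvd.dvd.mul_left h1 _) _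
    exact X_pow_dvd_iff.1 hdvd n (by omega)
  rw [Finset.sum_eq_zero hzero]
  have hlast : coeff n (T ^ (m + 2) * (X ^ n * B) ^ (m + 2 - (m + 2))
      * ((m + 2).choose (m + 2) : PowerSeries K))
      = ((trunc n F ^ p : Polynomial K) : PowerSeries K).coeff n := by
    rw [Nat.sub_self, pow_zero, mul_one, Nat.choose_self, Nat.cast_one, mul_one, hT,
      ← Polynomial.coe_pow, hm]
  have hsnd : coeff n (T ^ (m + 1) * (X ^ n * B) ^ (m + 2 - (m + 1))
      * ((m + 2).choose (m + 1) : PowerSeries K)) = (p : K) * coeff n F := by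
    have hch : (m + 2).choose (m + 1) = p := by
      rw [hm]
      rw [show m + 1 = (m + 2) - 1 from rfl, Nat.choose_symm (by omega), Nat.choose_one_right]
    rw [show m + 2 - (m + 1) = 1 from by omega, pow_one, hch]
    rw [show ((p : ℕ) : PowerSeries K) = C ((p : ℕ) : K) from (map_natCast C p).symm]
    rw [coeff_mul_C]
    rw [show T ^ (m + 1) * (X ^ n * B) = X ^ n * (T ^ (m + 1) * B) from by ring]
    rw [coeff_X_pow_mul' (T ^ (m + 1) * B) n n, if_pos (le_refl n), Nat.sub_self,
      coeff_zero_eq_constantCoeff, map_mul, map_pow]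
    have h1 : constantCoeff T = 1 := by
      rw [hT, Polynomial.constantCoeff_coe, coeff_trunc, if_pos (by omega)]
      rw [coeff_zero_eq_constantCoeff, hF0]
    have h2 : constantCoeff B = coeff n F := by
      rw [hB, constantCoeff_mk, Nat.add_zero]
    rw [h1, h2, one_pow]
    ring
  rw [hlast, hsnd]
  ring

end Aux

/-- The Dieudonné–Dwork lemma over number fields: with `τ` a Frobenius automorphism at an
unramified prime `𝔭` above `p`, and `F ∈ 1 + x·K[[x]]`, all coefficients of `F` lie in
`𝓞_{K,𝔭}` if and only if `F^τ(x^p)/F(x)^p ∈ 1 + p·x·𝓞_{K,𝔭}[[x]]`. -/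
theorem dieudonne_dwork
    (K : Type*) [Field K] [NumberField K] [IsGalois ℚ K]
    (p : ℕ) (hp : p.Prime)
    (hunram : ∀ 𝔮 : Ideal (𝓞 K), 𝔮.IsPrime → (p : 𝓞 K) ∈ 𝔮 →
      Ideal.ramificationIdx' (Ideal.span {(p : ℤ)}) 𝔮 = 1)
    (𝔭 : Ideal (𝓞 K)) (h𝔭 : 𝔭.IsPrime) (h𝔭0 : 𝔭 ≠ ⊥) (h𝔭p : (p : 𝓞 K) ∈ 𝔭)
    (τ : K ≃ₐ[ℚ] K) (hτ : IsFrobAt τ 𝔭 p)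
    (F : PowerSeries K) (hF0 : constantCoeff F = 1)
    (G : PowerSeries K)
    (hG : G = (mk fun n : ℕ => if p ∣ n then τ (coeff (n / p) F) else 0) * (F ^ p)⁻¹) :
    (∀ n : ℕ, MemLoc 𝔭 1 (coeff n F)) ↔
      (constantCoeff G = 1 ∧ ∀ n : ℕ, 1 ≤ n → MemLoc 𝔭 ((p : ℕ) : K) (coeff n G)) := by

  classical
  set R := Rloc 𝔭 h𝔭 with hRdef
  have hcharP : CharP (R ⧸ Ideal.span {(p : R)}) p := charP_quot h𝔭 hp h𝔭p
  have hp0K : ((p : ℕ) : K) ≠ 0 := Nat.cast_ne_zero.2 hp.ne_zero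
  have hFp0 : constantCoeff (F ^ p) = 1 := by rw [map_pow, hF0, one_pow]
  have hA : (mk fun n : ℕ => if p ∣ n then τ (coeff (n / p) F) else 0) = G * F ^ p := by
    rw [hG, mul_assoc, PowerSeries.inv_mul_cancel (F ^ p) (by rw [hFp0]; exact one_ne_zero),
      mul_one]
  have hG0 : constantCoeff G = 1 := by
    have h := congrArg (constantCoeff) hA
    rw [map_mul, hFp0, mul_one] at h
    rw [← h, constantCoeff_mk, if_pos (dvd_zero p), Nat.zero_div,
      coeff_zero_eq_constantCoeff, hF0, map_one]
  have hId : ∀ n : ℕ, (if p ∣ n then τ (coeff (n / p) F) else 0)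
      = ∑ k ∈ Finset.range (n + 1), coeff k G * coeff (n - k) (F ^ p) := by
    intro n
    have h := congrArg (coeff n) hA
    rw [coeff_mk, coeff_mul, Finset.Nat.sum_antidiagonal_eq_sum_range_succ_mk] at h
    exact h
  have hstar : ∀ n : ℕ, 1 ≤ n →
      ((p : ℕ) : K) * coeff n F + (trunc n F ^ p : Polynomial K).coeff n
        + ∑ k ∈ Finset.Ico 1 (n + 1), coeff k G * coeff (n - k) (F ^ p)
      = (if p ∣ n then τ (coeff (n / p) F) else 0) := by
    intro n hn
    have h1 := hId n
    have h2 := coeff_pow_split hp F hF0 hn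
    rw [Polynomial.coeff_coe] at h2
    rw [Finset.range_eq_Ico, Finset.sum_eq_sum_Ico_succ_bot (by omega : 0 < n + 1)] at h1
    rw [coeff_zero_eq_constantCoeff, hG0, one_mul, Nat.sub_zero] at h1
    linear_combination -h2 - h1
  have htr : ∀ n : ℕ, (∀ j, j < n → coeff j F ∈ R) → ∀ j, (trunc n F).coeff j ∈ R := by
    intro n h j
    rw [coeff_trunc]
    split
    · exact h j ‹_›
    · exact R.zero_mem
  have hifeq : ∀ n : ℕ, 1 ≤ n → (if p ∣ n then ((trunc n F).coeff (n / p)) ^ p else 0)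
      = (if p ∣ n then (coeff (n / p) F) ^ p else 0) := by
    intro n hn
    by_cases h : p ∣ n
    · rw [if_pos h, if_pos h, coeff_trunc, if_pos (Nat.div_lt_self (by omega) hp.one_lt)]
    · rw [if_neg h, if_neg h]
  have hDterm : ∀ n : ℕ, 1 ≤ n → (p ∣ n → coeff (n / p) F ∈ R) →
      ∃ c ∈ R, (if p ∣ n then τ (coeff (n / p) F) else 0)
        = (if p ∣ n then (coeff (n / p) F) ^ p else 0) + ((p : ℕ) : K) * c := by
    intro n hn hmem
    by_cases h : p ∣ n
    · obtain ⟨c, hc, hcc⟩ := frob_mod_p h𝔭 hp (hunram 𝔭 h𝔭 h𝔭p) h𝔭p hτ (hmem h)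
      exact ⟨c, hc, by rw [if_pos h, if_pos h, hcc]⟩
    · exact ⟨0, R.zero_mem, by rw [if_neg h, if_neg h]; ring⟩
  constructor
  · intro hFR
    refine ⟨hG0, ?_⟩
    have hFR' : ∀ j, coeff j F ∈ R := fun j => (memLoc_one_iff h𝔭).1 (hFR j)
    have main : ∀ n : ℕ, 1 ≤ n → coeff n G / ((p : ℕ) : K) ∈ R := by
      intro n
      induction n using Nat.strong_induction_on with
      | _ n ih =>
        intro hn
        obtain ⟨c₁, hc₁R, hc₁⟩ :=
          coeff_pow_p_poly hp hcharP (trunc n F) (htr n fun j _ => hFR' j) n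
        rw [hifeq n hn] at hc₁
        obtain ⟨c₂, hc₂R, hc₂⟩ := hDterm n hn fun _ => hFR' _
        have hs := hstar n hn
        rw [Finset.sum_Ico_succ_top (show 1 ≤ n by omega)] at hs
        rw [Nat.sub_self, coeff_zero_eq_constantCoeff, hFp0, mul_one] at hs
        have hsum : ∑ k ∈ Finset.Ico 1 n, coeff k G * coeff (n - k) (F ^ p)
            = ((p : ℕ) : K) * ∑ k ∈ Finset.Ico 1 n,
                (coeff k G / ((p : ℕ) : K)) * coeff (n - k) (F ^ p) := by
          rw [Finset.mul_sum]
          exact Finset.sum_congr rfl fun k hk => by field_simp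
        have key : coeff n G = ((p : ℕ) : K) * (c₂ - c₁ - coeff n F
            - ∑ k ∈ Finset.Ico 1 n, (coeff k G / ((p : ℕ) : K)) * coeff (n - k) (F ^ p)) := by
          linear_combination hs + hc₂ - hc₁ - hsum
        rw [key, mul_div_cancel_left₀ _ hp0K]
        refine R.sub_mem (R.sub_mem (R.sub_mem hc₂R hc₁R) (hFR' n)) (R.sum_mem fun k hk => ?_)
        rw [Finset.mem_Ico] at hk
        exact R.mul_mem (ih k (by omega) (by omega))
          (coeff_pow_mem (fun j _ => hFR' j) p (n - k) le_rfl)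
    intro n hn
    rw [memLoc_p_iff h𝔭]
    exact ⟨coeff n G / ((p : ℕ) : K), main n hn, by field_simp⟩
  · rintro ⟨hG0', hGp⟩
    have hbR : ∀ k, 1 ≤ k → coeff k G / ((p : ℕ) : K) ∈ R := by
      intro k hk
      obtain ⟨b, hbmem, hbeq⟩ := (memLoc_p_iff h𝔭).1 (hGp k hk)
      rw [hbeq, mul_div_cancel_left₀ _ hp0K]
      exact hbmem
    have main : ∀ n : ℕ, coeff n F ∈ R := by
      intro n
      induction n using Nat.strong_induction_on with
      | _ n ih =>
        rcases Nat.eq_zero_or_pos n with rfl | hn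
        · rw [coeff_zero_eq_constantCoeff, hF0]; exact R.one_mem
        obtain ⟨c₁, hc₁R, hc₁⟩ := coeff_pow_p_poly hp hcharP (trunc n F) (htr n fun j hj => ih j hj) n
        rw [hifeq n hn] at hc₁
        obtain ⟨c₂, hc₂R, hc₂⟩ := hDterm n hn fun hdvd =>
          ih (n / p) (Nat.div_lt_self (by omega) hp.one_lt)
        have hs := hstar n hn
        have hsum : ∑ k ∈ Finset.Ico 1 (n + 1), coeff k G * coeff (n - k) (F ^ p)
            = ((p : ℕ) : K) * ∑ k ∈ Finset.Ico 1 (n + 1),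
                (coeff k G / ((p : ℕ) : K)) * coeff (n - k) (F ^ p) := by
          rw [Finset.mul_sum]
          exact Finset.sum_congr rfl fun k hk => by field_simp
        have key : ((p : ℕ) : K) * coeff n F = ((p : ℕ) : K) * (c₂ - c₁
            - ∑ k ∈ Finset.Ico 1 (n + 1),
                (coeff k G / ((p : ℕ) : K)) * coeff (n - k) (F ^ p)) := by
          linear_combination hs + hc₂ - hc₁ - hsum
        rw [mul_left_cancel₀ hp0K key]
        refine R.sub_mem (R.sub_mem hc₂R hc₁R) (R.sum_mem fun k hk => ?_)
        rw [Finset.mem_Ico] at hk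
        exact R.mul_mem (hbR k (by omega))
          (coeff_pow_mem (m := n - k) (fun j hj => ih j (by omega)) p (n - k) le_rfl)
    exact fun n => (memLoc_one_iff h𝔭).2 (main n)
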